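/- arXiv:2206.14836 — 2 statements merged into one kernel-verified Lean document; each statement's English description precedes it below -/
import Mathlib

section
/- With notation as in the Keyes–Reiter operation (L an n×n symmetric integer matrix with L' its Chio condensation at entry (n,n)): for all k ∈ [n−2], d_n^{k−1}·D_{k+1}(L) divides D_k(L'), where d_n = ℓ_{n,n} and D_k denotes the gcd of all k×k minors. -/
open Matrix

/-- `Dk B k` is the gcd of all `k × k` minors of `B`. -/
noncomputable def Dk {m n : ℕ} (B : Matrix (Fin m) (Fin n) ℤ) (k : ℕ) : ℤ :=
  Finset.univ.gcd fun p : (Fin k ↪ Fin m) × (Fin k ↪ Fin n) =>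
    (B.submatrix p.1 p.2).det

/-- `DkStar B k` is the gcd of all `k × k` minors of `B` whose row set contains the
last row and whose column set contains the last column. -/
noncomputable def DkStar {m n : ℕ} (B : Matrix (Fin (m+1)) (Fin (n+1)) ℤ) (k : ℕ) : ℤ :=
  (Finset.univ.filter fun p : (Fin k ↪ Fin (m+1)) × (Fin k ↪ Fin (n+1)) =>
    (∃ i, p.1 i = Fin.last m) ∧ (∃ j, p.2 j = Fin.last n)).gcd
    fun p => (B.submatrix p.1 p.2).det

/-- Chio condensation of an `(n+1) × (n+1)` matrix at the entry `(n,n)`. -/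
def chio {n : ℕ} (L : Matrix (Fin (n+1)) (Fin (n+1)) ℤ) : Matrix (Fin n) (Fin n) ℤ :=
  fun i j => L i.castSucc j.castSucc * L (Fin.last n) (Fin.last n)
    - L i.castSucc (Fin.last n) * L (Fin.last n) j.castSucc

/-- gcd of the entries of the last row. -/
def lastRowGcd {n : ℕ} (L : Matrix (Fin (n+1)) (Fin (n+1)) ℤ) : ℤ :=
  Finset.univ.gcd fun j => L (Fin.last n) j

lemma chio_mul_det {k : ℕ} (A : Matrix (Fin (k+1)) (Fin (k+1)) ℤ) :
    A (Fin.last k) (Fin.last k) * (chio A).det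
      = A (Fin.last k) (Fin.last k) ^ k * A.det := by
  set a := A (Fin.last k) (Fin.last k) with ha
  set E : Matrix (Fin (k+1)) (Fin (k+1)) ℤ := fun i j =>
    if i = Fin.last k then (if j = Fin.last k then 1 else 0)
    else if j = i then a else if j = Fin.last k then -(A i (Fin.last k)) else 0 with hEdef
  have hEtri : E.BlockTriangular id := by
    intro i j hij
    have hji : j < i := hij
    have hjne : j ≠ i := ne_of_lt hji
    by_cases hi : i = Fin.last k
    · subst hi
      have : j ≠ Fin.last k := ne_of_lt hji
      simp [hEdef, this]
    · have hjl : j ≠ Fin.last k := ne_of_lt (lt_of_lt_of_le hji (Fin.le_last i))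
      simp [hEdef, hi, hjne, hjl]
  have hEdet : E.det = a ^ k := by
    rw [Matrix.det_of_upperTriangular hEtri]
    rw [Fin.prod_univ_castSucc]
    have h1 : E (Fin.last k) (Fin.last k) = 1 := by simp [hEdef]
    have h2 : ∀ i : Fin k, E i.castSucc i.castSucc = a := by
      intro i
      simp [hEdef, (Fin.castSucc_lt_last i).ne]
    simp [h1, h2]
  have hM : (E * A) = fun i j =>
      if i = Fin.last k then A (Fin.last k) j
      else a * A i j - A i (Fin.last k) * A (Fin.last k) j := by
    ext i j
    by_cases hi : i = Fin.last k
    · subst hi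
      rw [Matrix.mul_apply]
      simp only [hEdef, if_pos rfl]
      simp [ite_mul, Finset.sum_ite_eq']
    · rw [Matrix.mul_apply]
      simp only [hEdef, if_neg hi]
      have key : ∀ l, (if l = i then a else if l = Fin.last k then -(A i (Fin.last k)) else 0) * A l j
          = (if l = i then a * A i j else 0)
            + (if l = Fin.last k then -(A i (Fin.last k)) * A (Fin.last k) j else 0) := by
        intro l
        by_cases h1 : l = i
        · subst h1
          simp [hi]
        · by_cases h2 : l = Fin.last k
          · subst h2; simp [h1]
          · simp [h1, h2]
      rw [Finset.sum_congr rfl fun l _ => key l, Finset.sum_add_distrib]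
      simp [Finset.sum_ite_eq']
      ring
  have hdetM : (E * A).det = a ^ k * A.det := by
    rw [Matrix.det_mul, hEdet]
  rw [hM] at hdetM
  rw [Matrix.det_succ_column (fun i j =>
      if i = Fin.last k then A (Fin.last k) j
      else a * A i j - A i (Fin.last k) * A (Fin.last k) j : Matrix (Fin (k+1)) (Fin (k+1)) ℤ) (Fin.last k)] at hdetM
  rw [Finset.sum_eq_single (Fin.last k)] at hdetM
  · have hsub : Matrix.submatrix (fun i j =>
        if i = Fin.last k then A (Fin.last k) j
        else a * A i j - A i (Fin.last k) * A (Fin.last k) j :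
          Matrix (Fin (k+1)) (Fin (k+1)) ℤ)
        (Fin.last k).succAbove (Fin.last k).succAbove = chio A := by
      ext i j
      show (if (Fin.last k).succAbove i = Fin.last k then A (Fin.last k) ((Fin.last k).succAbove j)
        else a * A ((Fin.last k).succAbove i) ((Fin.last k).succAbove j)
          - A ((Fin.last k).succAbove i) (Fin.last k) * A (Fin.last k) ((Fin.last k).succAbove j)) = _
      simp only [Fin.succAbove_last, chio]
      rw [if_neg (Fin.castSucc_lt_last i).ne]
      ring
    rw [hsub] at hdetM
    have hsgn : ((-1 : ℤ)) ^ ((Fin.last k : ℕ) + (Fin.last k : ℕ)) = 1 := by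
      rw [← two_mul, pow_mul]; norm_num
    rw [← hdetM, hsgn]
    simp [mul_comm]
    exact Or.inl rfl
  · intro i _ hine
    have : (if i = Fin.last k then A (Fin.last k) (Fin.last k)
        else a * A i (Fin.last k) - A i (Fin.last k) * A (Fin.last k) (Fin.last k)) = 0 := by
      rw [if_neg hine]; rw [ha]; ring
    rw [this]; ring
  · intro h; exact absurd (Finset.mem_univ _) h

lemma chio_det_eq_zero {k : ℕ} (hk : 2 ≤ k) (A : Matrix (Fin (k+1)) (Fin (k+1)) ℤ)
    (ha : A (Fin.last k) (Fin.last k) = 0) : (chio A).det = 0 := by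
  have : chio A = Matrix.diagonal (fun i : Fin k => -(A i.castSucc (Fin.last k)))
      * (Matrix.of fun i j : Fin k => A (Fin.last k) j.castSucc) := by
    ext i j
    simp [chio, Matrix.diagonal_mul, ha]
  rw [this, Matrix.det_mul]
  have h0 : (Matrix.of fun i j : Fin k => A (Fin.last k) j.castSucc).det = 0 := by
    apply Matrix.det_zero_of_row_eq (i := ⟨0, by omega⟩) (j := ⟨1, by omega⟩)
    · exact Fin.ne_of_val_ne (by norm_num)
    · rfl
  rw [h0, mul_zero]

lemma chio_dvd {k : ℕ} (hk : 1 ≤ k) (A : Matrix (Fin (k+1)) (Fin (k+1)) ℤ) (D : ℤ)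
    (hD : D ∣ A.det) :
    A (Fin.last k) (Fin.last k) ^ (k-1) * D ∣ (chio A).det := by
  set a := A (Fin.last k) (Fin.last k) with ha
  by_cases h0 : a = 0
  · rcases eq_or_lt_of_le hk with h1 | h2
    · -- k = 1
      subst h1
      rw [show (1:ℕ)-1 = 0 from rfl, pow_zero, one_mul]
      have : (chio A).det = A.det := by
        rw [Matrix.det_fin_one, Matrix.det_fin_two]
        show chio A 0 0 = _
        simp only [chio]
        congr 1
      rw [this]; exact hD
    · have : (chio A).det = 0 := chio_det_eq_zero h2 A (by rw [← ha, h0])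
      rw [this]
      exact dvd_zero _
  · have key := chio_mul_det A
    rw [← ha] at key
    have hpow : a ^ k = a * a ^ (k - 1) := by
      conv_lhs => rw [show k = 1 + (k-1) by omega]
      rw [pow_add, pow_one]
    rw [hpow, mul_assoc] at key
    have heq : (chio A).det = a ^ (k-1) * A.det := mul_left_cancel₀ h0 key
    rw [heq]
    exact mul_dvd_mul_left _ hD

theorem stmt9' {n : ℕ} (L : Matrix (Fin (n+1)) (Fin (n+1)) ℤ)
    (k : ℕ) (hk1 : 1 ≤ k) :
    L (Fin.last n) (Fin.last n) ^ (k - 1) * Dk L (k + 1) ∣ Dk (chio L) k := by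
  unfold Dk
  apply Finset.dvd_gcd
  rintro ⟨r, c⟩ -
  have rinj : Function.Injective
      (Fin.snoc (fun i : Fin k => (r i).castSucc) (Fin.last n) : Fin (k+1) → Fin (n+1)) := by
    intro x y h
    induction x using Fin.lastCases with
    | last =>
      induction y using Fin.lastCases with
      | last => rfl
      | cast j =>
        rw [Fin.snoc_last, Fin.snoc_castSucc] at h
        exact absurd h.symm (Fin.castSucc_lt_last _).ne
    | cast i =>
      induction y using Fin.lastCases with
      | last =>
        rw [Fin.snoc_last, Fin.snoc_castSucc] at h
        exact absurd h (Fin.castSucc_lt_last _).ne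
      | cast j =>
        rw [Fin.snoc_castSucc, Fin.snoc_castSucc] at h
        exact congrArg Fin.castSucc (r.injective (Fin.castSucc_injective _ h))
  have cinj : Function.Injective
      (Fin.snoc (fun i : Fin k => (c i).castSucc) (Fin.last n) : Fin (k+1) → Fin (n+1)) := by
    intro x y h
    induction x using Fin.lastCases with
    | last =>
      induction y using Fin.lastCases with
      | last => rfl
      | cast j =>
        rw [Fin.snoc_last, Fin.snoc_castSucc] at h
        exact absurd h.symm (Fin.castSucc_lt_last _).ne
    | cast i =>
      induction y using Fin.lastCases with
      | last =>
        rw [Fin.snoc_last, Fin.snoc_castSucc] at h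
        exact absurd h (Fin.castSucc_lt_last _).ne
      | cast j =>
        rw [Fin.snoc_castSucc, Fin.snoc_castSucc] at h
        exact congrArg Fin.castSucc (c.injective (Fin.castSucc_injective _ h))
  set r' : Fin (k+1) ↪ Fin (n+1) := ⟨_, rinj⟩ with hr'
  set c' : Fin (k+1) ↪ Fin (n+1) := ⟨_, cinj⟩ with hc'
  set A := L.submatrix r' c' with hA
  have h1 : (chio L).submatrix r c = chio A := by
    ext i j
    simp [chio, hA, hr', hc', Fin.snoc_castSucc, Fin.snoc_last]
  have hlast : A (Fin.last k) (Fin.last k) = L (Fin.last n) (Fin.last n) := by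
    simp [hA, hr', hc', Fin.snoc_last]
  have hD : Dk L (k+1) ∣ A.det := Finset.gcd_dvd (Finset.mem_univ (r', c'))
  rw [h1, ← hlast]
  exact chio_dvd hk1 A _ hD


/-- for a symmetric `(n+1) × (n+1)` integer matrix `L` with Chio
condensation `L'` at `(n,n)` and `d_n = ℓ_{n,n}`, for all `k ∈ [(n+1)−2]`,
`d_n^{k−1} · D_{k+1}(L)` divides `D_k(L')`. -/
theorem stmt9 {n : ℕ} (L : Matrix (Fin (n+1)) (Fin (n+1)) ℤ) (hsymm : L.IsSymm)
    (k : ℕ) (hk1 : 1 ≤ k) (hk2 : k ≤ n - 1) :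
    L (Fin.last n) (Fin.last n) ^ (k - 1) * Dk L (k + 1) ∣ Dk (chio L) k := stmt9' L k hk1
end

section
/- Let (d, r) be an arithmetical structure on a connected loopless graph G with n ≥ 3 vertices, with L = diag(d) − A, and let (G', d', r') be the result of the Keyes–Reiter operation at v_n with matrix L'. Then d_n^{n−3}·|K(G; d, r)| divides |K(G'; d', r')|, where |K(G; d, r)| = D_{n−1}(L) and |K(G'; d', r')| = D_{n−2}(L') are the orders of the critical groups. -/
open Matrix
set_option maxHeartbeats 1000000

/-- extend an embedding by sending `last` to `last`. -/
def extEmb {k m : ℕ} (ρ : Fin k ↪ Fin m) : Fin (k+1) ↪ Fin (m+1) :=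
  ⟨Fin.snoc (fun i => (ρ i).castSucc) (Fin.last m), by
    intro a b hab
    induction a using Fin.lastCases with
    | last =>
      induction b using Fin.lastCases with
      | last => rfl
      | cast b =>
        simp only [Fin.snoc_last, Fin.snoc_castSucc] at hab
        exact absurd hab.symm (Fin.castSucc_lt_last _).ne
    | cast a =>
      induction b using Fin.lastCases with
      | last =>
        simp only [Fin.snoc_last, Fin.snoc_castSucc] at hab
        exact absurd hab (Fin.castSucc_lt_last _).ne
      | cast b =>
        simp only [Fin.snoc_castSucc] at hab
        exact congrArg Fin.castSucc (ρ.injective (Fin.castSucc_injective _ hab))⟩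

lemma extEmb_castSucc {k m : ℕ} (ρ : Fin k ↪ Fin m) (i : Fin k) :
    extEmb ρ i.castSucc = (ρ i).castSucc := by
  show Fin.snoc (α := fun _ => Fin (m+1)) (fun i => (ρ i).castSucc) (Fin.last m) i.castSucc = _
  exact Fin.snoc_castSucc (α := fun _ => Fin (m+1)) _ _ _

lemma extEmb_last {k m : ℕ} (ρ : Fin k ↪ Fin m) :
    extEmb ρ (Fin.last k) = Fin.last m := by
  show Fin.snoc (α := fun _ => Fin (m+1)) (fun i => (ρ i).castSucc) (Fin.last m) (Fin.last k) = _
  exact Fin.snoc_last (α := fun _ => Fin (m+1)) _ _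

lemma chio_submatrix {n k : ℕ} (L : Matrix (Fin (n+1)) (Fin (n+1)) ℤ)
    (ρ σ : Fin k ↪ Fin n) :
    (chio L).submatrix ρ σ = chio (L.submatrix (extEmb ρ) (extEmb σ)) := by
  funext i j
  simp [chio, extEmb_castSucc, extEmb_last, Matrix.submatrix_apply, Fin.snoc_castSucc, Fin.snoc_last]

/-- Chio's identity (with an extra factor of `c` to avoid division). -/
lemma chio_det {k : ℕ} (M : Matrix (Fin (k+1)) (Fin (k+1)) ℤ) :
    M (Fin.last k) (Fin.last k) * (chio M).det
      = M (Fin.last k) (Fin.last k) ^ k * M.det := by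
  set c := M (Fin.last k) (Fin.last k) with hc
  set a : Fin (k+1) → ℤ := fun i => if i = Fin.last k then 1 else c with ha
  set b : Fin (k+1) → ℤ := fun i => if i = Fin.last k then 0 else -(M i (Fin.last k)) with hb
  set S : Matrix (Fin (k+1)) (Fin (k+1)) ℤ := fun i l =>
    a i * (if l = i then 1 else 0) + b i * (if l = Fin.last k then 1 else 0) with hS
  have hSdet : S.det = c ^ k := by
    rw [Matrix.det_of_upperTriangular]
    · rw [Fin.prod_univ_castSucc]
      have h1 : ∀ i : Fin k, S i.castSucc i.castSucc = c := by
        intro i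
        simp [hS, ha, hb, (Fin.castSucc_lt_last i).ne]
      have h2 : S (Fin.last k) (Fin.last k) = 1 := by simp [hS, ha, hb]
      rw [h2, Finset.prod_congr rfl fun i _ => h1 i]
      simp
    · intro i j hij
      simp only [hS]
      have hji : j ≠ i := ne_of_lt hij
      have hjl : j ≠ Fin.last k := by
        intro h
        exact absurd (h ▸ hij) (by simp [Fin.le_last, not_lt])
      simp [hji, hjl]
  have hSM : ∀ i j, (S * M) i j = a i * M i j + b i * M (Fin.last k) j := by
    intro i j
    rw [Matrix.mul_apply]
    simp only [Matrix.mul_apply, hS, add_mul, ite_mul, one_mul, zero_mul, mul_ite, mul_one,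
      mul_zero, Finset.sum_add_distrib, Finset.sum_ite_eq, Finset.sum_ite_eq', Finset.mem_univ, if_true]
  have hcol : ∀ i : Fin (k+1), i ≠ Fin.last k → (S * M) i (Fin.last k) = 0 := by
    intro i hi
    rw [hSM]
    simp [ha, hb, hi, ← hc]
    ring
  have hlastrow : ∀ j, (S * M) (Fin.last k) j = M (Fin.last k) j := by
    intro j
    rw [hSM]; simp [ha, hb]
  have hexp : (S * M).det = c * (chio M).det := by
    rw [Matrix.det_succ_column (S * M) (Fin.last k)]
    rw [Finset.sum_eq_single (Fin.last k)]
    · rw [hlastrow, ← hc, Fin.succAbove_last]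
      have hsub : (S * M).submatrix Fin.castSucc Fin.castSucc = chio M := by
        funext i j
        rw [Matrix.submatrix_apply, hSM]
        simp only [chio, ha, hb, (Fin.castSucc_lt_last i).ne, if_false, ← hc]
        ring
      rw [hsub]
      have hpow : ((-1:ℤ)) ^ ((Fin.last k : ℕ) + (Fin.last k : ℕ)) = 1 := by
        rw [← two_mul]; exact Even.neg_one_pow (even_two_mul k)
      rw [hpow, one_mul]
    · intro i _ hi
      rw [hcol i hi]
      ring
    · intro h; exact absurd (Finset.mem_univ _) h
  have : c * (chio M).det = c ^ k * M.det := by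
    rw [← hexp, Matrix.det_mul, hSdet]
  exact this

/-- for an arithmetical structure `(d, r)` on a connected loopless graph
with `n+1 ≥ 3` vertices, `d_n^{(n+1)−3} · |K(G; d, r)|` divides `|K(G'; d', r')|`,
where `|K(G; d, r)| = D_{n}(L)` and `|K(G'; d', r')| = D_{n−1}(L')`. -/
theorem stmt11 {n : ℕ} (hn : 2 ≤ n) (A : Matrix (Fin (n+1)) (Fin (n+1)) ℤ)
    (d r : Fin (n+1) → ℤ)
    (hAsymm : A.IsSymm) (hAloop : ∀ i, A i i = 0) (hAnonneg : ∀ i j, 0 ≤ A i j)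
    (hconn : (SimpleGraph.fromRel fun i j => A i j ≠ 0).Connected)
    (hd : ∀ i, 0 ≤ d i) (hr : ∀ i, 0 < r i)
    (hrgcd : Finset.univ.gcd r = 1)
    (hstruct : (Matrix.diagonal d - A).mulVec r = 0) :
    d (Fin.last n) ^ (n - 2) * Dk (Matrix.diagonal d - A) n
      ∣ Dk (chio (Matrix.diagonal d - A)) (n - 1) := by
  set L : Matrix (Fin (n+1)) (Fin (n+1)) ℤ := Matrix.diagonal d - A with hLdef
  -- Step 1 : `d (last) ≠ 0`
  have hdlast : d (Fin.last n) ≠ 0 := by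
    intro hd0
    -- from the structure equation, the last row gives 0 = ∑ A last j * r j
    have h0 : ∑ j, L (Fin.last n) j * r j = 0 := by
      have h0' := congrFun hstruct (Fin.last n)
      simpa [Matrix.mulVec, dotProduct] using h0'
    have hsum : ∑ j, A (Fin.last n) j * r j = 0 := by
      have : ∑ j, L (Fin.last n) j * r j
          = d (Fin.last n) * r (Fin.last n) - ∑ j, A (Fin.last n) j * r j := by
        simp only [hLdef, Matrix.sub_apply, Matrix.diagonal_apply, sub_mul,
          Finset.sum_sub_distrib, ite_mul, zero_mul]
        simp
      rw [this, hd0, zero_mul, zero_sub, neg_eq_zero] at h0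
      exact h0
    have hzero : ∀ j : Fin (n+1), A (Fin.last n) j = 0 := by
      intro j
      have hterm : A (Fin.last n) j * r j = 0 := by
        have := (Finset.sum_eq_zero_iff_of_nonneg
          (fun j _ => mul_nonneg (hAnonneg _ j) (hr j).le)).mp hsum j (Finset.mem_univ j)
        exact this
      rcases mul_eq_zero.mp hterm with h | h
      · exact h
      · exact absurd h (hr j).ne'
    -- connectivity contradiction
    have h01 : (Fin.last n) ≠ (0 : Fin (n+1)) := by
      simp [Fin.ext_iff, Fin.val_last]
      omega
    obtain ⟨p⟩ := hconn.preconnected (Fin.last n) 0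
    have hnil : ¬ p.Nil := SimpleGraph.Walk.not_nil_of_ne h01
    have hadj := (p.firstDart hnil).adj
    rw [SimpleGraph.fromRel_adj] at hadj
    rcases hadj.2 with h | h
    · exact h (hzero _)
    · exact h (hAsymm.apply _ _ ▸ hzero _)
  have hLlast : ∀ (ρ σ : Fin (n-1) ↪ Fin n),
      (L.submatrix (extEmb ρ) (extEmb σ)) (Fin.last (n-1)) (Fin.last (n-1))
        = d (Fin.last n) := by
    intro ρ σ
    simp [extEmb_last, Fin.snoc_last, hLdef, Matrix.diagonal_apply, hAloop]
  -- Step 2 : divisibility of each minor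
  apply Finset.dvd_gcd
  rintro ⟨ρ, σ⟩ -
  set M : Matrix (Fin (n-1+1)) (Fin (n-1+1)) ℤ := L.submatrix (extEmb ρ) (extEmb σ) with hM
  have hchio : ((chio L).submatrix ρ σ).det = (chio M).det := by
    rw [chio_submatrix]
  have hMlast : M (Fin.last (n-1)) (Fin.last (n-1)) = d (Fin.last n) := hLlast ρ σ
  have hkey := chio_det M
  rw [hMlast] at hkey
  have hn1 : n - 1 = (n - 2) + 1 := by omega
  have hcancel : (chio M).det = d (Fin.last n) ^ (n-2) * M.det := by
    apply mul_left_cancel₀ hdlast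
    rw [hkey]
    have hpow : d (Fin.last n) ^ (n-1) = d (Fin.last n) * d (Fin.last n) ^ (n-2) := by
      rw [hn1, pow_succ]; ring
    rw [hpow]; ring
  have hDn : Dk L n ∣ M.det := by
    have he : n = n - 1 + 1 := by omega
    let e : Fin n ≃ Fin (n-1+1) := finCongr he
    have : (L.submatrix ((e.toEmbedding).trans (extEmb ρ)) ((e.toEmbedding).trans (extEmb σ))).det
        = M.det := by
      have hmat : L.submatrix ((e.toEmbedding).trans (extEmb ρ)) ((e.toEmbedding).trans (extEmb σ))
          = M.submatrix e e := by
        rw [hM, Matrix.submatrix_submatrix]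
        rfl
      rw [hmat]
      exact Matrix.det_submatrix_equiv_self e M
    rw [← this]
    exact Finset.gcd_dvd (Finset.mem_univ (((e.toEmbedding).trans (extEmb ρ)),
      ((e.toEmbedding).trans (extEmb σ))))
  show d (Fin.last n) ^ (n - 2) * Dk L n ∣ ((chio L).submatrix ρ σ).det
  rw [hchio, hcancel]
  exact mul_dvd_mul dvd_rfl hDn
end
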